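/- Let B be the Banach space of bounded functions X → ℝ with the sup norm. Fix a compact set A, nonnegative coefficients l^α_{j,i} ≥ 0 with Σ_i l^α_{j,i} = M/k² for each j and α, bounded coefficients c^α_j with sup |c^{α,+}| =: C_c, a parameter θ ∈ [0,1], and data F^α_j, U^{prev} ∈ B. Define for ε > 0 the map T : B → B by (TU)_j = U_j - ε·sup_α { (1 + θΔt(M/k² - c^α_j))U_j - θΔt Σ_{i≠j} l^α_{j,i}U_i - F^α_j(U^{prev}) }. If ε is small enough that 1 - ε(1 + θΔt(M/k² - c^α_j)) ≥ 0 for all j, α, and εΔtθC_c < ε, then T is a contraction on B with Lipschitz constant 1 - ε(1 - ΔtθC_c), provided ΔtθC_c < 1. -/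
import Mathlib

/-- One-sided key estimate: `T U j - T V j ≤ (1 - ε(1 - Δt θ C_c)) ⨆ |U - V|`. -/
lemma SL_key_estimate
    {X A : Type*} [Nonempty X] [Nonempty A] [DecidableEq X]
    (l : A → X → X → ℝ) (c : A → X → ℝ) (F : A → X → ℝ)
    (θ Δt k M Cc ε : ℝ)
    (hθ0 : 0 ≤ θ) (hΔt : 0 < Δt) (hk : 0 < k) (hM : 1 ≤ M)
    (hl : ∀ α j i, 0 ≤ l α j i) (hlsum : ∀ α j, Summable (l α j))
    (hrow : ∀ α j, (∑' i, l α j i) = M / k ^ 2)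
    (hc : ∀ α j, max (c α j) 0 ≤ Cc)
    (hε : 0 < ε)
    (hsmall : ∀ α j, 0 ≤ 1 - ε * (1 + θ * Δt * (M / k ^ 2 - c α j)))
    (T : (X → ℝ) → X → ℝ)
    (hT : ∀ U j, T U j = U j - ε *
      ⨆ α, ((1 + θ * Δt * (M / k ^ 2 - c α j)) * U j
        - θ * Δt * (∑' i, if i = j then 0 else l α j i * U i) - F α j))
    (U V : X → ℝ)
    (hUV : BddAbove (Set.range fun i => |U i - V i|))
    (hU : ∀ j, BddAbove (Set.range fun α =>
        (1 + θ * Δt * (M / k ^ 2 - c α j)) * U j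
          - θ * Δt * (∑' i, if i = j then 0 else l α j i * U i) - F α j))
    (j : X) :
    T U j - T V j ≤ (1 - ε * (1 - Δt * θ * Cc)) * ⨆ i, |U i - V i| := by
  set D := ⨆ i, |U i - V i| with hDdef
  have hDle : ∀ i, |U i - V i| ≤ D := fun i => le_ciSup hUV i
  have hD0 : 0 ≤ D := (abs_nonneg _).trans (hDle j)
  have hd := abs_le.mp (hDle j)
  have hθΔt : 0 ≤ θ * Δt := mul_nonneg hθ0 hΔt.le
  have hMk : (0:ℝ) ≤ M / k ^ 2 := by positivity
  set K := 1 - ε * (1 - Δt * θ * Cc) with hKdef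
  rw [hT U j, hT V j]
  suffices h : ε * (⨆ α, ((1 + θ * Δt * (M / k ^ 2 - c α j)) * V j
        - θ * Δt * (∑' i, if i = j then 0 else l α j i * V i) - F α j))
      ≤ ε * (⨆ α, ((1 + θ * Δt * (M / k ^ 2 - c α j)) * U j
        - θ * Δt * (∑' i, if i = j then 0 else l α j i * U i) - F α j))
        + (K * D - (U j - V j)) by linarith
  rw [Real.mul_iSup_of_nonneg hε.le]
  apply ciSup_le
  intro α
  have hle' : ε * ((1 + θ * Δt * (M / k ^ 2 - c α j)) * U j
      - θ * Δt * (∑' i, if i = j then 0 else l α j i * U i) - F α j)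
      ≤ ε * ⨆ α', ((1 + θ * Δt * (M / k ^ 2 - c α' j)) * U j
      - θ * Δt * (∑' i, if i = j then 0 else l α' j i * U i) - F α' j) :=
    mul_le_mul_of_nonneg_left (le_ciSup (hU j) α) hε.le
  have hC : c α j ≤ Cc := (le_max_left _ _).trans (hc α j)
  have hsm := hsmall α j
  -- the difference function is summable
  have hdiff : Summable (fun i => if i = j then 0 else l α j i * (U i - V i)) := by
    rw [← summable_abs_iff]
    apply Summable.of_nonneg_of_le (fun i => abs_nonneg _) _ ((hlsum α j).mul_right D)
    intro i
    by_cases hij : i = j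
    · simp [hij]
      exact mul_nonneg (hl α j j) hD0
    · simp only [hij, if_false, abs_mul, abs_of_nonneg (hl α j i)]
      exact mul_le_mul_of_nonneg_left (hDle i) (hl α j i)
  by_cases hs : Summable (fun i => if i = j then 0 else l α j i * U i)
  · -- summable case
    have hsV : Summable (fun i => if i = j then 0 else l α j i * V i) := by
      refine (hs.sub hdiff).congr fun i => ?_
      by_cases hij : i = j <;> simp [hij] <;> ring
    have htsub : (∑' i, if i = j then 0 else l α j i * U i)
        - (∑' i, if i = j then 0 else l α j i * V i)
        = ∑' i, (if i = j then 0 else l α j i * (U i - V i)) := by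
      rw [← Summable.tsum_sub hs hsV]
      refine tsum_congr fun i => ?_
      by_cases hij : i = j <;> simp [hij] <;> ring
    have hbound : (∑' i, (if i = j then 0 else l α j i * (U i - V i)))
        ≤ M / k ^ 2 * D := by
      have h1 : (∑' i, (if i = j then 0 else l α j i * (U i - V i)))
          ≤ ∑' i, l α j i * D := by
        refine Summable.tsum_le_tsum (fun i => ?_) hdiff ((hlsum α j).mul_right D)
        by_cases hij : i = j
        · simp [hij]
          exact mul_nonneg (hl α j j) hD0
        · simp only [hij, if_false]
          refine mul_le_mul_of_nonneg_left ((le_abs_self _).trans (hDle i)) (hl α j i)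
      rwa [tsum_mul_right, hrow] at h1
    have httuv : (∑' i, if i = j then 0 else l α j i * U i)
        - (∑' i, if i = j then 0 else l α j i * V i) ≤ M / k ^ 2 * D := by
      rw [htsub]; exact hbound
    have hA : (1 - ε * (1 + θ * Δt * (M / k ^ 2 - c α j))) * (U j - V j)
        ≤ (1 - ε * (1 + θ * Δt * (M / k ^ 2 - c α j))) * D :=
      mul_le_mul_of_nonneg_left hd.2 hsm
    have hB : ε * (θ * Δt) * ((∑' i, if i = j then 0 else l α j i * U i)
        - (∑' i, if i = j then 0 else l α j i * V i))
        ≤ ε * (θ * Δt) * (M / k ^ 2 * D) :=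
      mul_le_mul_of_nonneg_left httuv (by positivity)
    have hCc' : 0 ≤ ε * (θ * Δt) * (Cc - c α j) * D :=
      mul_nonneg (mul_nonneg (by positivity) (sub_nonneg.2 hC)) hD0
    rw [hKdef]
    nlinarith [hA, hB, hCc', hle']
  · -- non-summable case: both tsums are zero
    have hsV : ¬ Summable (fun i => if i = j then 0 else l α j i * V i) := by
      intro h
      apply hs
      refine (h.add hdiff).congr fun i => ?_
      by_cases hij : i = j <;> simp [hij] <;> ring
    rw [tsum_eq_zero_of_not_summable hs] at hle'
    rw [tsum_eq_zero_of_not_summable hsV]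
    have hA : (1 - ε * (1 + θ * Δt * (M / k ^ 2 - c α j))) * (U j - V j)
        ≤ (1 - ε * (1 + θ * Δt * (M / k ^ 2 - c α j))) * D :=
      mul_le_mul_of_nonneg_left hd.2 hsm
    have hCc' : 0 ≤ ε * (θ * Δt) * (Cc - c α j) * D :=
      mul_nonneg (mul_nonneg (by positivity) (sub_nonneg.2 hC)) hD0
    have hMk' : 0 ≤ ε * (θ * Δt) * (M / k ^ 2) * D :=
      mul_nonneg (mul_nonneg (by positivity) hMk) hD0
    rw [hKdef]
    nlinarith [hA, hCc', hMk', hle']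

/-- The fixed-point map `T` of the implicit SL scheme is a contraction on the
space of bounded functions, with Lipschitz constant `1 - ε(1 - Δt θ C_c)`. -/
theorem SL_fixed_point_contraction
    {X A : Type*} [Nonempty X] [Nonempty A] [DecidableEq X]
    (l : A → X → X → ℝ) (c : A → X → ℝ) (F : A → X → ℝ)
    (θ Δt k M Cc ε : ℝ)
    (hθ0 : 0 ≤ θ) (hθ1 : θ ≤ 1) (hΔt : 0 < Δt) (hk : 0 < k) (hM : 1 ≤ M)
    (hl : ∀ α j i, 0 ≤ l α j i) (hlsum : ∀ α j, Summable (l α j))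
    (hrow : ∀ α j, (∑' i, l α j i) = M / k ^ 2)
    (hCc : 0 ≤ Cc) (hc : ∀ α j, max (c α j) 0 ≤ Cc)
    (hε : 0 < ε)
    (hsmall : ∀ α j, 0 ≤ 1 - ε * (1 + θ * Δt * (M / k ^ 2 - c α j)))
    (hCFL : Δt * θ * Cc < 1)
    (T : (X → ℝ) → X → ℝ)
    (hT : ∀ U j, T U j = U j - ε *
      ⨆ α, ((1 + θ * Δt * (M / k ^ 2 - c α j)) * U j
        - θ * Δt * (∑' i, if i = j then 0 else l α j i * U i) - F α j)) :
    ∀ U V : X → ℝ,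
      BddAbove (Set.range fun i => |U i - V i|) →
      (∀ j, BddAbove (Set.range fun α =>
        (1 + θ * Δt * (M / k ^ 2 - c α j)) * U j
          - θ * Δt * (∑' i, if i = j then 0 else l α j i * U i) - F α j)) →
      (∀ j, BddAbove (Set.range fun α =>
        (1 + θ * Δt * (M / k ^ 2 - c α j)) * V j
          - θ * Δt * (∑' i, if i = j then 0 else l α j i * V i) - F α j)) →
      ∀ j, |T U j - T V j| ≤ (1 - ε * (1 - Δt * θ * Cc)) * ⨆ i, |U i - V i| := by
  intro U V hUV hU hV j
  have hfun : (fun i => |V i - U i|) = fun i => |U i - V i| :=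
    funext fun i => abs_sub_comm _ _
  have hUV' : BddAbove (Set.range fun i => |V i - U i|) := by rw [hfun]; exact hUV
  have habs : (⨆ i, |V i - U i|) = ⨆ i, |U i - V i| := by rw [hfun]
  rw [abs_sub_le_iff]
  constructor
  · exact SL_key_estimate l c F θ Δt k M Cc ε hθ0 hΔt hk hM hl hlsum hrow hc hε
      hsmall T hT U V hUV hU j
  · have h := SL_key_estimate l c F θ Δt k M Cc ε hθ0 hΔt hk hM hl hlsum hrow hc hε
      hsmall T hT V U hUV' hV j
    rwa [habs] at h
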